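/- Let B = {(e^{2πiz}, (m + nτ)·e^{−πiz/3}) : z ∈ ℍ, (m,n) ∈ ℤ²} ⊆ ℂ². Then the intersection of the closure of B in the set {(s,v) ∈ ℂ² : |s| < 1} with the locus {s = 0} is the single point (0, 0). (In the paper this shows that, for the order-six quotient family of elliptic curves, the closure of the family of integral lattices inside the dual Hodge line bundle adds only one point over the origin, so that the fiber of J̄(ℋ) over 0 is a copy of ℂ.) -/

import Mathlib

/-- For `τ = e^{iπ/3}`, the closure of
`B = {(e^{2πiz}, (m + nτ)e^{-πiz/3}) : z ∈ ℍ, (m,n) ∈ ℤ²}` inside `{(s,v) : |s| < 1}`,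
intersected with the locus `s = 0`, is the single point `(0, 0)`. -/
theorem stmt16
    (τ : ℂ) (hτ : τ = Complex.exp (Real.pi * Complex.I / 3))
    (B : Set (ℂ × ℂ))
    (hB : B = {p | ∃ z : ℂ, 0 < z.im ∧ ∃ m n : ℤ,
      p = (Complex.exp (2 * Real.pi * Complex.I * z),
           ((m : ℂ) + (n : ℂ) * τ) * Complex.exp (-(Real.pi * Complex.I * z / 3)))}) :
    {p : ℂ × ℂ | p ∈ closure B ∧ ‖p.1‖ < 1 ∧ p.1 = 0} =
      {((0 : ℂ), (0 : ℂ))} := by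
  have hre : τ.re = 1/2 := by
    rw [hτ, Complex.exp_re]; simp [Real.cos_pi_div_three]
  have him : τ.im = Real.sqrt 3 / 2 := by
    rw [hτ, Complex.exp_im]; simp [Real.sin_pi_div_three]
  -- the lattice is discrete: nonzero points have |m + nτ| ≥ 1
  have hlat : ∀ m n : ℤ, (m ≠ 0 ∨ n ≠ 0) → (1:ℝ) ≤ ‖(m:ℂ) + (n:ℂ) * τ‖ := by
    intro m n h
    have h3 : (Real.sqrt 3)^2 = 3 := Real.sq_sqrt (by norm_num)
    have hns : Complex.normSq ((m:ℂ) + (n:ℂ) * τ) = ((m^2 + m*n + n^2 : ℤ) : ℝ) := by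
      simp [Complex.normSq_apply, Complex.add_re, Complex.add_im, Complex.mul_re,
        Complex.mul_im, hre, him]
      nlinarith [h3]
    have hk : (1:ℤ) ≤ m^2 + m*n + n^2 := by
      rcases h with h | h
      · have hm2 : 1 ≤ m^2 := by rcases lt_or_gt_of_ne h with h | h <;> nlinarith
        nlinarith [sq_nonneg (2*n+m)]
      · have hn2 : 1 ≤ n^2 := by rcases lt_or_gt_of_ne h with h | h <;> nlinarith
        nlinarith [sq_nonneg (2*m+n)]
    have h1 : (1:ℝ) ≤ Complex.normSq ((m:ℂ) + (n:ℂ) * τ) := by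
      rw [hns]; exact_mod_cast hk
    rw [Complex.norm_def]
    exact Real.one_le_sqrt.mpr h1
  -- real-part computations
  have hre1 : ∀ z : ℂ, (2 * (Real.pi:ℂ) * Complex.I * z).re = -(2*Real.pi*z.im) := by
    intro z; simp [Complex.mul_re]
  have hre2 : ∀ z : ℂ, (-((Real.pi:ℂ) * Complex.I * z / 3)).re = Real.pi * z.im / 3 := by
    intro z; simp [Complex.mul_re, Complex.div_re]; ring
  ext p
  simp only [Set.mem_setOf_eq, Set.mem_singleton_iff]
  constructor
  · rintro ⟨hcl, -, hp1⟩
    have hp2 : p.2 = 0 := by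
      by_contra hv
      have hvpos : 0 < ‖p.2‖ := by
        simpa [norm_pos_iff] using hv
      set c : ℝ := 3 * ‖p.2‖ / 2 + 1 with hc_def
      have hc : 0 < c := by positivity
      have hεpos : 0 < min (‖p.2‖ / 2) (c⁻¹ ^ 6) := by positivity
      obtain ⟨b, hbB, hdist⟩ := Metric.mem_closure_iff.mp hcl _ hεpos
      rw [hB] at hbB
      obtain ⟨z, hz, m, n, rfl⟩ := hbB
      rw [Prod.dist_eq, max_lt_iff] at hdist
      obtain ⟨hd1, hd2⟩ := hdist
      rw [Complex.dist_eq] at hd1 hd2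
      simp only [hp1, zero_sub, norm_neg] at hd1
      by_cases hmn : m = 0 ∧ n = 0
      · -- the lattice point is 0, so second coordinate is exactly 0, far from p.2
        obtain ⟨rfl, rfl⟩ := hmn
        simp only [Int.cast_zero, zero_mul, add_zero, zero_add, zero_mul, sub_zero] at hd2
        have := lt_of_lt_of_le hd2 (min_le_left _ _)
        linarith
      · -- nonzero lattice point: second coordinate has large modulus
        have hmn' : m ≠ 0 ∨ n ≠ 0 := by tauto
        set w : ℂ := ((m:ℂ) + (n:ℂ) * τ) *
          Complex.exp (-((Real.pi:ℂ) * Complex.I * z / 3)) with hw_def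
        have hd2' : ‖p.2 - w‖ < min (‖p.2‖ / 2) (c⁻¹ ^ 6) := hd2
        have habs1 : ‖Complex.exp (2 * (Real.pi:ℂ) * Complex.I * z)‖
            = Real.exp (-(2*Real.pi*z.im)) := by
          rw [Complex.norm_exp, hre1]
        have habs2 : ‖w‖
            = ‖(m:ℂ) + (n:ℂ) * τ‖ * Real.exp (Real.pi * z.im / 3) := by
          rw [hw_def, norm_mul, Complex.norm_exp, hre2]
        -- from |s| < c⁻¹^6 deduce exp(πy/3) > c
        have hs : Real.exp (-(2*Real.pi*z.im)) < c⁻¹ ^ 6 := by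
          rw [← habs1]
          exact lt_of_lt_of_le hd1 (min_le_right _ _)
        have hpow : c ^ 6 < Real.exp (Real.pi * z.im / 3) ^ 6 := by
          have h1 : Real.exp (Real.pi * z.im / 3) ^ 6 = Real.exp (2*Real.pi*z.im) := by
            rw [← Real.exp_nat_mul]; ring_nf
          rw [h1]
          rw [Real.exp_neg, inv_pow] at hs
          exact (inv_lt_inv₀ (by positivity) (by positivity)).mp hs
        have hcexp : c < Real.exp (Real.pi * z.im / 3) :=
          lt_of_pow_lt_pow_left₀ 6 (Real.exp_pos _).le hpow
        -- but the second coordinate is within |p.2|/2 of p.2, so has modulus < c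
        have htri : ‖w‖ - ‖p.2‖ ≤ ‖p.2 - w‖ := by
          have h := norm_sub_norm_le w p.2
          rw [norm_sub_rev] at h
          simpa using h
        have hsmall : ‖p.2 - w‖ < ‖p.2‖ / 2 :=
          lt_of_lt_of_le hd2' (min_le_left _ _)
        have hw_lt : ‖w‖ < c := by rw [hc_def]; linarith
        have hbig : c < ‖w‖ := by
          rw [habs2]
          calc c < Real.exp (Real.pi * z.im / 3) := hcexp
            _ = 1 * Real.exp (Real.pi * z.im / 3) := (one_mul _).symm
            _ ≤ ‖(m:ℂ) + (n:ℂ) * τ‖ * Real.exp (Real.pi * z.im / 3) :=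
                mul_le_mul_of_nonneg_right (hlat m n hmn') (Real.exp_pos _).le
        linarith
    exact Prod.ext hp1 hp2
  · rintro rfl
    refine ⟨?_, by simp, rfl⟩
    -- (0,0) is a limit of points of B with z = (k+1)i, m = n = 0
    have hmem : ∀ k : ℕ,
        ((Complex.exp (2 * Real.pi * Complex.I * (((k:ℂ)+1) * Complex.I)), (0:ℂ))) ∈ B := by
      intro k
      rw [hB]
      refine ⟨((k:ℂ)+1) * Complex.I, ?_, 0, 0, ?_⟩
      · simp [Complex.add_im, Complex.mul_im]
        positivity
      · simp
    have htend : Filter.Tendsto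
        (fun k : ℕ => ((Complex.exp (2 * Real.pi * Complex.I * (((k:ℂ)+1) * Complex.I)), (0:ℂ))))
        Filter.atTop (nhds ((0:ℂ), (0:ℂ))) := by
      refine Filter.Tendsto.prodMk_nhds ?_ tendsto_const_nhds
      rw [tendsto_zero_iff_norm_tendsto_zero]
      have heq : ∀ k : ℕ, ‖Complex.exp (2 * Real.pi * Complex.I * (((k:ℂ)+1) * Complex.I))‖
          = Real.exp (-(2*Real.pi*((k:ℝ)+1))) := by
        intro k
        rw [Complex.norm_exp, hre1]
        congr 1
        simp [Complex.mul_im]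
      simp only [heq]
      have : Filter.Tendsto (fun k : ℕ => -(2*Real.pi*((k:ℝ)+1))) Filter.atTop Filter.atBot := by
        apply Filter.tendsto_neg_atBot_iff.mpr
        apply Filter.Tendsto.const_mul_atTop (by positivity : (0:ℝ) < 2*Real.pi)
        exact Filter.tendsto_atTop_add_const_right _ 1 tendsto_natCast_atTop_atTop
      exact Real.tendsto_exp_atBot.comp this
    exact mem_closure_of_tendsto htend (Filter.Eventually.of_forall hmem)
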